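/- Under hyper-generalized recurrence with recurrence 1-forms A and B, if r = 0 and B(Ric₀ X) = 0 for all X ∈ V, then the cyclic identity 𝔖_{X,Y,Z} { A(X)·B(R(Y,Z)W) } = 0 holds for all X, Y, Z, W ∈ V, where 𝔖_{X,Y,Z} denotes the cyclic sum over X, Y, Z and B(R(Y,Z)W) = R(Y,Z,W,ρ) with ρ the g-dual of B. (Theorem 2.5(c).) -/

import Mathlib

open scoped BigOperators

/-- Kulkarni–Nomizu product of two bilinear forms (as real-valued functions). -/
def KN {V : Type*} (h k : V → V → ℝ) (X Y Z W : V) : ℝ :=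
  h X Z * k Y W + h Y W * k X Z - h X W * k Y Z - h Y Z * k X W

/-- The tensor `G(X,Y,Z,W) = g(X,Z)g(Y,W) - g(Y,Z)g(X,W)`. -/
def Gten {V : Type*} (g : V → V → ℝ) (X Y Z W : V) : ℝ :=
  g X Z * g Y W - g Y Z * g X W

/-- Derivation action of the curvature endomorphism `Rend U V` on a quadrilinear form `T`. -/
def derAct {V : Type*} (Rend : V → V → V → V) (T : V → V → V → V → ℝ)
    (U V' X Y Z W : V) : ℝ :=
  - T (Rend U V' X) Y Z W - T X (Rend U V' Y) Z W
    - T X Y (Rend U V' Z) W - T X Y Z (Rend U V' W)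

theorem hgr_zero_scalar_cyclic_AB_identity {V : Type*} [AddCommGroup V] [Module ℝ V]
    (n : ℕ) (hn : 3 ≤ n)
    (b : Module.Basis (Fin n) ℝ V) (e' : Fin n → V)
    (g : V →ₗ[ℝ] V →ₗ[ℝ] ℝ)
    (hg_symm : ∀ X Y, g X Y = g Y X)
    (hg_nd : ∀ X, (∀ Y, g X Y = 0) → X = 0)
    (hdual : ∀ i j, g (b i) (e' j) = if i = j then (1 : ℝ) else 0)
    (R : V →ₗ[ℝ] V →ₗ[ℝ] V →ₗ[ℝ] V →ₗ[ℝ] ℝ)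
    (hR_ne : R ≠ 0)
    (hR_anti : ∀ X Y Z W, R X Y Z W = - R Y X Z W)
    (hR_pair : ∀ X Y Z W, R X Y Z W = R Z W X Y)
    (Ric : V → V → ℝ)
    (hRic : ∀ X Z, Ric X Z = ∑ i, R X (b i) Z (e' i))
    (r : ℝ) (hr : r = ∑ i, Ric (b i) (e' i))
    (Ric₀ : V →ₗ[ℝ] V)
    (hRic₀ : ∀ X Y, g (Ric₀ X) Y = Ric X Y)
    (D : V →ₗ[ℝ] V →ₗ[ℝ] V →ₗ[ℝ] V →ₗ[ℝ] V →ₗ[ℝ] ℝ)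
    (hBianchi : ∀ X Y Z W U, D X Y Z W U + D Y Z X W U + D Z X Y W U = 0)
    (A B : V →ₗ[ℝ] ℝ) (hA : A ≠ 0) (hB : B ≠ 0)
    (hHGR : ∀ U X Y Z W,
      D U X Y Z W = A U * R X Y Z W + B U * KN (fun a c => g a c) Ric X Y Z W)
    (hr0 : r = 0)
    (hBRic : ∀ X, B (Ric₀ X) = 0)
    (ρ : V) (hρ : ∀ X, g ρ X = B X)
    (Rend : V → V → V → V)
    (hRend : ∀ X Y Z W, g (Rend X Y Z) W = R X Y Z W)
    :
    ∀ X Y Z W,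
      A X * B (Rend Y Z W) + A Y * B (Rend Z X W) + A Z * B (Rend X Y W) = 0 := by
  intro X Y Z W
  have hgρ : ∀ T : V, g T ρ = B T := fun T => by rw [hg_symm, hρ]
  have hRicρ : ∀ T : V, Ric T ρ = 0 := fun T => by
    rw [← hRic₀, hgρ, hBRic]
  have hBR : ∀ T1 T2 T3 : V, B (Rend T1 T2 T3) = R T1 T2 T3 ρ := fun a c d => by
    rw [← hgρ, hRend]
  have key := hBianchi X Y Z W ρ
  rw [hHGR, hHGR, hHGR] at key
  simp only [KN, hgρ, hRicρ] at key
  rw [hBR, hBR, hBR]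
  linear_combination key
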